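/- Let A be a cellular algebra over a field with cell datum (Λ, M, C, *). Then the set {D_λ : λ ∈ Λ, D_λ ≠ 0}, where D_λ = S_λ / rad(φ_λ), is a complete set of pairwise non-isomorphic simple A-modules. -/

import Mathlib

open Classical

/-- The span of the cellular basis elements `C^μ_{U,V}` with `μ < λ`. -/
def lowerSpan {R A : Type*} [CommRing R] [Ring A] [Algebra R A] {Λ : Type*}
    [PartialOrder Λ] {M : Λ → Type*} (C : ∀ l, M l → M l → A) (l : Λ) : Submodule R A :=
  Submodule.span R {x | ∃ m, m < l ∧ ∃ U V, x = C m U V}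

set_option linter.unusedSectionVars false
set_option maxHeartbeats 1000000

section Helpers

variable {k A Λ : Type*} [Field k] [Ring A] [Algebra k A] [PartialOrder Λ] [Fintype Λ]
    {M : Λ → Type*} [∀ l, Fintype (M l)]
    {C : ∀ l, M l → M l → A}
    {b : Module.Basis ((l : Λ) × (M l × M l)) k A}
    (hb : ∀ (l) (S T : M l), b ⟨l, (S, T)⟩ = C l S T)

/-- Span of basis elements at levels satisfying `Q`. -/
def qSpan (C : ∀ l, M l → M l → A) (Q : Λ → Prop) : Submodule k A :=
  Submodule.span k {x | ∃ m, Q m ∧ ∃ U V, x = C m U V}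

lemma lowerSpan_eq_qSpan (l : Λ) : lowerSpan (R := k) C l = qSpan C (· < l) := rfl

include hb in
lemma repr_qSpan_zero {Q : Λ → Prop} {x : A} (hx : x ∈ qSpan (k := k) C Q) {l : Λ} (hl : ¬ Q l)
    (S T : M l) : b.repr x ⟨l, (S, T)⟩ = 0 := by
  induction hx using Submodule.span_induction with
  | mem y hy =>
      obtain ⟨m, hm, U, V, rfl⟩ := hy
      rw [← hb, Module.Basis.repr_self, Finsupp.single_apply, if_neg]
      intro h
      exact hl (by cases (congrArg Sigma.fst h); exact hm)
  | zero => simp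
  | add y z _ _ hy hz => rw [map_add, Finsupp.add_apply, hy, hz, add_zero]
  | smul c y _ hy => rw [map_smul, Finsupp.smul_apply, hy, smul_zero]

lemma qSpan_mono {Q Q' : Λ → Prop} (h : ∀ m, Q m → Q' m) : qSpan C Q ≤ qSpan (k := k) C Q' := by
  apply Submodule.span_mono
  rintro x ⟨m, hm, U, V, rfl⟩
  exact ⟨m, h m hm, U, V, rfl⟩

lemma C_mem_qSpan {Q : Λ → Prop} {m : Λ} (hm : Q m) (U V : M m) : C m U V ∈ qSpan (k := k) C Q :=
  Submodule.subset_span ⟨m, hm, U, V, rfl⟩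

variable (coeff : A → ∀ l : Λ, M l → M l → k)
variable (hcoeff : ∀ (a : A) (l) (S T : M l),
      a * C l S T - ∑ S' : M l, coeff a l S' S • C l S' T ∈ lowerSpan (R := k) C l)

include hcoeff in
/-- `qSpan` for a downward-closed `Q` is a left ideal. -/
lemma mul_mem_qSpan {Q : Λ → Prop} (hQ : ∀ m m', m' < m → Q m → Q m') (a : A) {x : A}
    (hx : x ∈ qSpan (k := k) C Q) : a * x ∈ qSpan (k := k) C Q := by
  induction hx using Submodule.span_induction with
  | mem y hy =>
      obtain ⟨m, hm, U, V, rfl⟩ := hy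
      have h1 := hcoeff a m U V
      have : a * C m U V =
          (a * C m U V - ∑ S' : M m, coeff a m S' U • C m S' V)
          + ∑ S' : M m, coeff a m S' U • C m S' V := (sub_add_cancel _ _).symm
      rw [this]
      refine Submodule.add_mem _ ?_ (Submodule.sum_mem _ fun S' _ =>
        Submodule.smul_mem _ _ (C_mem_qSpan hm S' V))
      exact qSpan_mono (fun m' hm' => hQ m m' hm' hm) h1
  | zero => rw [mul_zero]; exact Submodule.zero_mem _
  | add y z _ _ hy hz => rw [mul_add]; exact Submodule.add_mem _ hy hz
  | smul c y _ hy => rw [mul_smul_comm]; exact Submodule.smul_mem _ _ hy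

variable (st : A →ₗ[k] A)
variable (hstC : ∀ (l) (S T : M l), st (C l S T) = C l T S)

include hstC in
lemma st_mem_qSpan {Q : Λ → Prop} {x : A} (hx : x ∈ qSpan (k := k) C Q) :
    st x ∈ qSpan (k := k) C Q := by
  induction hx using Submodule.span_induction with
  | mem y hy =>
      obtain ⟨m, hm, U, V, rfl⟩ := hy
      rw [hstC]; exact C_mem_qSpan hm V U
  | zero => rw [map_zero]; exact Submodule.zero_mem _
  | add y z _ _ hy hz => rw [map_add]; exact Submodule.add_mem _ hy hz
  | smul c y _ hy => rw [map_smul]; exact Submodule.smul_mem _ _ hy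

variable (hst_mul : ∀ x y : A, st (x * y) = st y * st x)
variable (hst_inv : ∀ x : A, st (st x) = x)

include hcoeff hstC hst_mul hst_inv in
lemma mem_qSpan_mul {Q : Λ → Prop} (hQ : ∀ m m', m' < m → Q m → Q m') (a : A) {x : A}
    (hx : x ∈ qSpan (k := k) C Q) : x * a ∈ qSpan (k := k) C Q := by
  have h1 : st (st a * st x) ∈ qSpan (k := k) C Q :=
    st_mem_qSpan st hstC (mul_mem_qSpan coeff hcoeff hQ _ (st_mem_qSpan st hstC hx))
  rwa [hst_mul, hst_inv, hst_inv] at h1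


variable (phi : ∀ l, M l → M l → k)
variable (hphi : ∀ (l) (S T U V : M l),
      C l S T * C l U V - algebraMap k A (phi l T U) * C l S V ∈ lowerSpan (R := k) C l)

lemma sigma_mk_eq_iff {l : Λ} {S T S' T' : M l} :
    (⟨l, (S, T)⟩ : (l : Λ) × (M l × M l)) = ⟨l, (S', T')⟩ ↔ S = S' ∧ T = T' := by
  simp

include hb hcoeff in
lemma coeff_eq_repr (a : A) (l : Λ) (S U V : M l) :
    coeff a l S U = b.repr (a * C l U V) ⟨l, (S, V)⟩ := by
  have hd := repr_qSpan_zero hb (hcoeff a l U V) (lt_irrefl l) S V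
  rw [map_sub, Finsupp.sub_apply, sub_eq_zero] at hd
  rw [hd, map_sum, Finsupp.coe_finset_sum, Finset.sum_apply]
  rw [Finset.sum_eq_single S]
  · rw [map_smul, ← hb, Module.Basis.repr_self, Finsupp.smul_apply, Finsupp.single_apply,
      if_pos rfl, smul_eq_mul, mul_one]
  · intro S' _ hS'
    rw [map_smul, ← hb, Module.Basis.repr_self, Finsupp.smul_apply, Finsupp.single_apply,
      if_neg (fun h => hS' (sigma_mk_eq_iff.mp h).1), smul_zero]
  · intro h; exact absurd (Finset.mem_univ S) h

include hb hcoeff hphi in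
lemma coeff_C (l : Λ) (S T S' U : M l) :
    coeff (C l S T) l S' U = if S' = S then phi l T U else 0 := by
  rw [coeff_eq_repr hb coeff hcoeff (C l S T) l S' U U]
  have hd := repr_qSpan_zero hb (hphi l S T U U) (lt_irrefl l) S' U
  rw [map_sub, Finsupp.sub_apply, sub_eq_zero] at hd
  rw [hd, ← Algebra.smul_def, map_smul, ← hb, Module.Basis.repr_self, Finsupp.smul_apply,
    Finsupp.single_apply, smul_eq_mul]
  by_cases h : S' = S
  · subst h; rw [if_pos rfl, if_pos rfl, mul_one]
  · rw [if_neg (fun hh => h ((sigma_mk_eq_iff.mp hh).1.symm)), if_neg h, mul_zero]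

include hb hstC hst_mul hphi in
lemma phi_symm (l : Λ) (T U : M l) : phi l T U = phi l U T := by
  have d1 := hphi l T T U U
  have d1' : C l U U * C l T T - phi l T U • C l U T ∈ lowerSpan (R := k) C l := by
    have h := st_mem_qSpan (C := C) st hstC (Q := (· < l)) d1
    rw [map_sub, hst_mul, hstC, hstC, ← Algebra.smul_def, map_smul, hstC] at h
    exact h
  have d2 := hphi l U U T T
  rw [← Algebra.smul_def] at d2
  have d3 : (phi l U T - phi l T U) • C l U T ∈ lowerSpan (R := k) C l := by
    have := Submodule.sub_mem _ d1' d2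
    rw [sub_sub_sub_cancel_left, ← sub_smul] at this
    exact this
  have h0 := repr_qSpan_zero hb d3 (lt_irrefl l) U T
  rw [map_smul, ← hb, Module.Basis.repr_self, Finsupp.smul_apply, Finsupp.single_apply,
    if_pos rfl, smul_eq_mul, mul_one, sub_eq_zero] at h0
  exact h0.symm

include hb hcoeff hstC hst_mul hst_inv in
lemma coeff_zero_of_not_le {m μ : Λ} (h : ¬ m ≤ μ) (X Y : M μ) (S' U : M m) :
    coeff (C μ X Y) m S' U = 0 := by
  rw [coeff_eq_repr hb coeff hcoeff (C μ X Y) m S' U U]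
  have hmem : C μ X Y * C m U U ∈ qSpan (k := k) C (· ≤ μ) :=
    mem_qSpan_mul (Q := (· ≤ μ)) coeff hcoeff st hstC hst_mul hst_inv
      (fun a a' ha' ha => le_of_lt (lt_of_lt_of_le ha' ha)) (C m U U)
      (C_mem_qSpan (Q := (· ≤ μ)) (le_refl μ) X Y)
  exact repr_qSpan_zero hb hmem h S' U

variable {Sm : Λ → Type*} [∀ l, AddCommGroup (Sm l)] [∀ l, Module k (Sm l)]
    [∀ l, Module A (Sm l)] [∀ l, IsScalarTower k A (Sm l)]
    (bS : ∀ l, Module.Basis (M l) k (Sm l))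
    (haction : ∀ (a : A) (l) (T : M l),
      a • bS l T = ∑ S' : M l, coeff a l S' T • bS l S')
    (Φ : ∀ l, Sm l → Sm l → k)
    (hΦ : ∀ (l) (x y : Sm l), Φ l x y = ∑ T : M l, ∑ U : M l,
      (bS l).repr x T * phi l T U * (bS l).repr y U)

lemma smul_comm_kA {l : Λ} (a : A) (c : k) (x : Sm l) : a • (c • x) = c • (a • x) := by
  rw [← algebraMap_smul A c x, ← mul_smul, ← Algebra.commutes, mul_smul, algebraMap_smul]

include hΦ in
lemma Φ_bS (l : Λ) (T' : M l) (x : Sm l) :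
    Φ l (bS l T') x = ∑ U : M l, phi l T' U * (bS l).repr x U := by
  rw [hΦ]
  simp [Module.Basis.repr_self, Finsupp.single_apply, ite_mul, one_mul, zero_mul,
    Finset.sum_ite_eq, Finset.sum_ite_eq']

include hΦ in
lemma Φ_basis (l : Λ) (T U : M l) : Φ l (bS l T) (bS l U) = phi l T U := by
  rw [Φ_bS phi bS Φ hΦ]
  simp [Module.Basis.repr_self, Finsupp.single_apply, Finset.sum_ite_eq, Finset.sum_ite_eq']

include hΦ in
lemma Φ_expand_left (l : Λ) (y x : Sm l) :
    Φ l y x = ∑ T : M l, (bS l).repr y T * Φ l (bS l T) x := by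
  rw [hΦ]
  refine Finset.sum_congr rfl fun T _ => ?_
  rw [Φ_bS phi bS Φ hΦ, Finset.mul_sum]
  refine Finset.sum_congr rfl fun U _ => by ring

include hb hstC hst_mul hphi hΦ in
lemma Φ_symm (l : Λ) (x y : Sm l) : Φ l x y = Φ l y x := by
  rw [hΦ, hΦ, Finset.sum_comm]
  refine Finset.sum_congr rfl fun U _ => Finset.sum_congr rfl fun T _ => ?_
  rw [phi_symm hb st hstC hst_mul phi hphi l T U]
  ring

include hb hcoeff hphi haction hΦ in
lemma act_C (l : Λ) (S T : M l) (x : Sm l) :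
    C l S T • x = Φ l (bS l T) x • bS l S := by
  conv_lhs => rw [← Module.Basis.sum_repr (bS l) x]
  rw [Finset.smul_sum]
  have h1 : ∀ U : M l, C l S T • ((bS l).repr x U • bS l U)
      = ((bS l).repr x U * phi l T U) • bS l S := by
    intro U
    rw [smul_comm_kA, haction]
    rw [Finset.sum_congr rfl (fun S' _ => by
      rw [coeff_C hb coeff hcoeff phi hphi l S T S' U])]
    simp only [ite_smul, zero_smul, Finset.sum_ite_eq', Finset.mem_univ, if_pos, if_true]
    rw [smul_smul]
  rw [Finset.sum_congr rfl (fun U _ => h1 U), ← Finset.sum_smul, Φ_bS phi bS Φ hΦ]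
  congr 1
  exact Finset.sum_congr rfl fun U _ => mul_comm _ _

include hb hcoeff hstC hst_mul hst_inv haction in
lemma act_zero {m μ : Λ} (h : ¬ m ≤ μ) (X Y : M μ) (x : Sm m) :
    C μ X Y • x = 0 := by
  conv_lhs => rw [← Module.Basis.sum_repr (bS m) x]
  rw [Finset.smul_sum]
  refine Finset.sum_eq_zero fun U _ => ?_
  rw [smul_comm_kA, haction]
  rw [Finset.sum_congr rfl (fun S' _ => by
    rw [coeff_zero_of_not_le hb coeff hcoeff st hstC hst_mul hst_inv h X Y S' U])]
  simp

variable (rad : ∀ l, Submodule A (Sm l))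
variable (hrad : ∀ (l) (x : Sm l), x ∈ rad l ↔ ∀ y : Sm l, Φ l x y = 0)

include hb hstC hst_mul hphi hΦ hrad in
lemma mem_rad_iff (l : Λ) (x : Sm l) :
    x ∈ rad l ↔ ∀ T' : M l, Φ l (bS l T') x = 0 := by
  rw [hrad]
  constructor
  · intro h T'
    rw [Φ_symm hb st hstC hst_mul phi hphi bS Φ hΦ]
    exact h _
  · intro h y
    rw [Φ_symm hb st hstC hst_mul phi hphi bS Φ hΦ, Φ_expand_left phi bS Φ hΦ]
    exact Finset.sum_eq_zero fun T _ => by rw [h T, mul_zero]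

include hΦ hrad in
lemma nontrivial_quotient_of_phi_ne {l : Λ} {T U : M l} (h : phi l T U ≠ 0) :
    Nontrivial (Sm l ⧸ rad l) := by
  refine Submodule.Quotient.nontrivial_iff.mpr (fun htop => ?_)
  have : bS l T ∈ rad l := htop ▸ Submodule.mem_top
  exact h (by rw [← Φ_basis phi bS Φ hΦ l T U]; exact (hrad l _).mp this (bS l U))

include hΦ hrad in
lemma exists_phi_ne_of_nontrivial {l : Λ} (h : Nontrivial (Sm l ⧸ rad l)) :
    ∃ T U : M l, phi l T U ≠ 0 := by
  by_contra hc
  push_neg at hc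
  have : rad l = ⊤ := by
    rw [eq_top_iff]
    intro x _
    rw [hrad]
    intro y
    rw [hΦ]
    exact Finset.sum_eq_zero fun T _ => Finset.sum_eq_zero fun U _ => by
      rw [hc T U, mul_zero, zero_mul]
  exact (not_subsingleton_iff_nontrivial.mpr h)
    (Submodule.Quotient.subsingleton_iff.mpr this)

include hΦ in
lemma Φ_smul_left (l : Λ) (c : k) (x y : Sm l) : Φ l (c • x) y = c * Φ l x y := by
  rw [hΦ, hΦ, Finset.mul_sum]
  refine Finset.sum_congr rfl fun T _ => ?_
  rw [Finset.mul_sum]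
  refine Finset.sum_congr rfl fun U _ => ?_
  rw [map_smul, Finsupp.smul_apply, smul_eq_mul]; ring

include hΦ in
lemma Φ_smul_right (l : Λ) (c : k) (x y : Sm l) : Φ l x (c • y) = c * Φ l x y := by
  rw [hΦ, hΦ, Finset.mul_sum]
  refine Finset.sum_congr rfl fun T _ => ?_
  rw [Finset.mul_sum]
  refine Finset.sum_congr rfl fun U _ => ?_
  rw [map_smul, Finsupp.smul_apply, smul_eq_mul]; ring

include hΦ in
lemma Φ_add_right (l : Λ) (x y z : Sm l) : Φ l x (y + z) = Φ l x y + Φ l x z := by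
  rw [hΦ, hΦ, hΦ, ← Finset.sum_add_distrib]
  refine Finset.sum_congr rfl fun T _ => ?_
  rw [← Finset.sum_add_distrib]
  refine Finset.sum_congr rfl fun U _ => ?_
  rw [map_add, Finsupp.add_apply]; ring

include hΦ in
lemma Φ_zero_right (l : Λ) (x : Sm l) : Φ l x 0 = 0 := by
  rw [hΦ]
  exact Finset.sum_eq_zero fun T _ => Finset.sum_eq_zero fun U _ => by
    rw [map_zero]; simp

include hb hcoeff hstC hst_mul hphi haction hΦ hrad in
theorem part1 (l : Λ) (hnt : Nontrivial (Sm l ⧸ rad l)) :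
    IsSimpleModule A (Sm l ⧸ rad l) := by
  rw [isSimpleModule_iff_isCoatom]
  constructor
  · intro htop
    exact (not_subsingleton_iff_nontrivial.mpr hnt)
      (Submodule.Quotient.subsingleton_iff.mpr htop)
  · intro q hq
    obtain ⟨x, hxq, hxrad⟩ := SetLike.exists_of_lt hq
    obtain ⟨T', hT'⟩ : ∃ T', Φ l (bS l T') x ≠ 0 := by
      by_contra hc; push_neg at hc
      exact hxrad ((mem_rad_iff hb st hstC hst_mul phi hphi bS Φ hΦ rad hrad l x).mpr hc)
    have hbs : ∀ S' : M l, bS l S' ∈ q := by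
      intro S'
      have h1 : C l S' T' • x ∈ q := q.smul_mem _ hxq
      rw [act_C hb coeff hcoeff phi hphi bS haction Φ hΦ] at h1
      have h2 := q.smul_mem (algebraMap k A (Φ l (bS l T') x)⁻¹) h1
      rwa [algebraMap_smul, smul_smul, inv_mul_cancel₀ hT', one_smul] at h2
    rw [eq_top_iff]
    intro y _
    rw [← Module.Basis.sum_repr (bS l) y]
    exact Submodule.sum_mem _ fun S' _ => by
      rw [← algebraMap_smul A]
      exact q.smul_mem _ (hbs S')

include hb hcoeff hstC hst_mul hst_inv hphi haction hΦ hrad in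
lemma le_of_equiv (l m : Λ) (h1 : Nontrivial (Sm l ⧸ rad l))
    (e : (Sm l ⧸ rad l) ≃ₗ[A] (Sm m ⧸ rad m)) : m ≤ l := by
  by_contra hml
  obtain ⟨T, U, hTU⟩ := exists_phi_ne_of_nontrivial phi bS Φ hΦ rad hrad h1
  set z : Sm l ⧸ rad l := Submodule.Quotient.mk (bS l U) with hz
  have hCz : C l T T • z ≠ 0 := by
    rw [hz, ← Submodule.Quotient.mk_smul,
      act_C hb coeff hcoeff phi hphi bS haction Φ hΦ l T T (bS l U),
      Ne, Submodule.Quotient.mk_eq_zero]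
    intro hmem
    have h0 := (hrad l _).mp hmem (bS l U)
    rw [Φ_smul_left phi bS Φ hΦ, Φ_basis phi bS Φ hΦ] at h0
    exact hTU (by rcases mul_eq_zero.mp h0 with h | h <;> exact h)
  have hez : C l T T • e z ≠ 0 := by
    intro h0
    exact hCz (by
      have := e.injective (show e (C l T T • z) = e 0 by rw [map_smul, h0, map_zero])
      exact this)
  obtain ⟨x, hx⟩ := Submodule.Quotient.mk_surjective (rad m) (e z)
  apply hez
  rw [← hx, ← Submodule.Quotient.mk_smul,
    act_zero hb coeff hcoeff st hstC hst_mul hst_inv bS haction hml T T x]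
  rfl

include hb hcoeff hstC hst_mul hst_inv hphi haction hΦ hrad in
theorem part2 (l m : Λ) (h1 : Nontrivial (Sm l ⧸ rad l)) (h2 : Nontrivial (Sm m ⧸ rad m))
    (he : Nonempty ((Sm l ⧸ rad l) ≃ₗ[A] (Sm m ⧸ rad m))) : l = m := by
  obtain ⟨e⟩ := he
  exact le_antisymm
    (le_of_equiv hb coeff hcoeff st hstC hst_mul hst_inv phi hphi bS haction Φ hΦ rad hrad m l h2 e.symm)
    (le_of_equiv hb coeff hcoeff st hstC hst_mul hst_inv phi hphi bS haction Φ hΦ rad hrad l m h1 e)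

include hb hcoeff hstC hst_mul hst_inv hphi haction hΦ hrad in
theorem part3 (L : Type*) [AddCommGroup L] [Module A L] (hL : IsSimpleModule A L) :
    ∃ l : Λ, Nontrivial (Sm l ⧸ rad l) ∧ Nonempty (L ≃ₗ[A] (Sm l ⧸ rad l)) := by
  haveI := hL
  haveI : Nontrivial L := IsSimpleModule.nontrivial A L
  obtain ⟨v₀, hv₀⟩ := exists_ne (0 : L)
  have hZne : ∃ l : Λ, ∃ S T : M l, ∃ v : L, C l S T • v ≠ 0 := by
    by_contra hc
    push_neg at hc
    apply hv₀
    rw [← one_smul A v₀, ← Module.Basis.sum_repr b 1, Finset.sum_smul]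
    refine Finset.sum_eq_zero fun i _ => ?_
    rcases i with ⟨l, S, T⟩
    rw [Algebra.smul_def, mul_smul, hb, hc l S T v₀, smul_zero]
  set Z : Finset Λ := Finset.univ.filter
      (fun l => ∃ S T : M l, ∃ v : L, C l S T • v ≠ 0) with hZdef
  obtain ⟨l, hlZ, hmin⟩ := Finset.exists_minimal (s := Z)
    (by obtain ⟨l, h⟩ := hZne
        exact ⟨l, Finset.mem_filter.mpr ⟨Finset.mem_univ _, h⟩⟩)
  obtain ⟨S, T, v, hv⟩ := (Finset.mem_filter.mp hlZ).2
  have hlow : ∀ m, m < l → ∀ (X Y : M m) (u : L), C m X Y • u = 0 := by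
    intro m hm X Y u
    by_contra hne
    exact absurd (hmin (Finset.mem_filter.mpr ⟨Finset.mem_univ _, ⟨X, Y, u, hne⟩⟩) hm.le) (not_le_of_gt hm)
  have hkill : ∀ x ∈ lowerSpan (R := k) C l, ∀ u : L, x • u = 0 := by
    intro x hx
    induction hx using Submodule.span_induction with
    | mem y hy =>
        obtain ⟨m, hm, X, Y, rfl⟩ := hy
        exact fun u => hlow m hm X Y u
    | zero => exact fun u => zero_smul A u
    | add y z _ _ hy hz => exact fun u => by rw [add_smul, hy u, hz u, add_zero]
    | smul c y _ hy => exact fun u => by rw [Algebra.smul_def, mul_smul, hy u, smul_zero]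
  set CC : Sm l →ₗ[k] A := (bS l).constr k (fun U => C l U T) with hCCdef
  have hCCb : ∀ U : M l, CC (bS l U) = C l U T := fun U => Module.Basis.constr_basis _ _ _ _
  have key : ∀ (a : A) (x : Sm l), CC (a • x) - a * CC x ∈ lowerSpan (R := k) C l := by
    intro a x
    have hx : x ∈ Submodule.span k (Set.range (bS l)) := by
      rw [Module.Basis.span_eq]; exact Submodule.mem_top
    induction hx using Submodule.span_induction with
    | mem y hy =>
        obtain ⟨U, rfl⟩ := hy
        rw [haction a l U]
        have h2 : CC (∑ S' : M l, coeff a l S' U • bS l S')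
            = ∑ S' : M l, coeff a l S' U • C l S' T := by
          rw [map_sum]
          exact Finset.sum_congr rfl fun S' _ => by rw [map_smul, hCCb]
        rw [h2, hCCb, ← neg_sub]
        exact Submodule.neg_mem _ (hcoeff a l U T)
    | zero => simp
    | add y z _ _ hy hz =>
        have e1 : CC (a • (y + z)) - a * CC (y + z)
            = (CC (a • y) - a * CC y) + (CC (a • z) - a * CC z) := by
          rw [smul_add, map_add, map_add, mul_add]; abel
        rw [e1]; exact Submodule.add_mem _ hy hz
    | smul c y _ hy =>
        have e1 : CC (a • (c • y)) - a * CC (c • y)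
            = c • (CC (a • y) - a * CC y) := by
          rw [smul_comm_kA, CC.map_smul, CC.map_smul, mul_smul_comm, smul_sub]
        rw [e1]; exact Submodule.smul_mem _ _ hy
  set θ : Sm l →ₗ[A] L := {
    toFun := fun x => CC x • v
    map_add' := fun x y => by
      show CC (x + y) • v = CC x • v + CC y • v
      rw [map_add, add_smul]
    map_smul' := fun a x => by
      show CC (a • x) • v = (RingHom.id A) a • (CC x • v)
      have h0 := hkill _ (key a x) v
      rw [sub_smul] at h0
      simp only [RingHom.id_apply]
      rw [← mul_smul]
      exact sub_eq_zero.mp h0 } with hθdef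
  have hθapp : ∀ x : Sm l, θ x = CC x • v := fun x => rfl
  have hθb : ∀ S' : M l, θ (bS l S') = C l S' T • v := fun S' => by
    rw [hθapp, hCCb]
  set w : L := C l S T • v with hwdef
  have claim : ∀ (S' T' : M l) (x : Sm l),
      C l S' T' * CC x - Φ l (bS l T') x • C l S' T ∈ lowerSpan (R := k) C l := by
    intro S' T' x
    have hx : x ∈ Submodule.span k (Set.range (bS l)) := by
      rw [Module.Basis.span_eq]; exact Submodule.mem_top
    induction hx using Submodule.span_induction with
    | mem y hy =>
        obtain ⟨U, rfl⟩ := hy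
        rw [hCCb, Φ_basis phi bS Φ hΦ]
        have := hphi l S' T' U T
        rwa [← Algebra.smul_def] at this
    | zero =>
        rw [map_zero, mul_zero, Φ_zero_right phi bS Φ hΦ, zero_smul, sub_zero]
        exact Submodule.zero_mem _
    | add y z _ _ hy hz =>
        have e1 : C l S' T' * CC (y + z) - Φ l (bS l T') (y + z) • C l S' T
            = (C l S' T' * CC y - Φ l (bS l T') y • C l S' T)
            + (C l S' T' * CC z - Φ l (bS l T') z • C l S' T) := by
          rw [map_add, mul_add, Φ_add_right phi bS Φ hΦ, add_smul]; abel
        rw [e1]; exact Submodule.add_mem _ hy hz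
    | smul c y _ hy =>
        have e1 : C l S' T' * CC (c • y) - Φ l (bS l T') (c • y) • C l S' T
            = c • (C l S' T' * CC y - Φ l (bS l T') y • C l S' T) := by
          rw [CC.map_smul, mul_smul_comm, Φ_smul_right phi bS Φ hΦ, mul_smul, smul_sub]
        rw [e1]; exact Submodule.smul_mem _ _ hy
  have hθact : ∀ (S' T' : M l) (x : Sm l),
      C l S' T' • θ x = (Φ l (bS l T') x • C l S' T) • v := by
    intro S' T' x
    have h0 := hkill _ (claim S' T' x) v
    rw [sub_smul] at h0
    rw [hθapp, ← mul_smul]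
    exact sub_eq_zero.mp h0
  have hvspan : ∃ a : A, a • w = v := by
    have hne : Submodule.span A {w} ≠ ⊥ :=
      fun hbot => hv (Submodule.span_singleton_eq_bot.mp hbot)
    rcases eq_bot_or_eq_top (Submodule.span A {w}) with h | h
    · exact absurd h hne
    · exact Submodule.mem_span_singleton.mp (h ▸ Submodule.mem_top (x := v))
  obtain ⟨a, ha⟩ := hvspan
  set r : k := ∑ S' : M l, coeff a l S' S * phi l T S' with hrdef
  have hclaim2 : C l S T * (a * C l S T) - r • C l S T ∈ lowerSpan (R := k) C l := by
    have h2 : C l S T * (a * C l S T - ∑ S' : M l, coeff a l S' S • C l S' T)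
        ∈ lowerSpan (R := k) C l :=
      mul_mem_qSpan (Q := (· < l)) coeff hcoeff (fun m m' hm' hm => hm'.trans hm) _
        (hcoeff a l S T)
    have h3 : ∀ S' : M l, C l S T * C l S' T - phi l T S' • C l S T
        ∈ lowerSpan (R := k) C l := by
      intro S'
      have := hphi l S T S' T
      rwa [← Algebra.smul_def] at this
    have h4 := Submodule.add_mem _ h2 (Submodule.sum_mem _ fun S' (_ : S' ∈ Finset.univ) =>
      Submodule.smul_mem _ (coeff a l S' S) (h3 S'))
    convert h4 using 1
    rw [mul_sub]
    rw [show ∑ S' : M l, coeff a l S' S • (C l S T * C l S' T - phi l T S' • C l S T)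
        = C l S T * (∑ S' : M l, coeff a l S' S • C l S' T) - r • C l S T from ?_]
    · abel
    · rw [Finset.mul_sum, hrdef,
        show (∑ S' : M l, coeff a l S' S * phi l T S') • C l S T
          = ∑ S' : M l, (coeff a l S' S * phi l T S') • C l S T from Finset.sum_smul,
        ← Finset.sum_sub_distrib]
      exact Finset.sum_congr rfl fun S' _ => by rw [smul_sub, mul_smul_comm, smul_smul]
  have hw2 : w = (algebraMap k A r) • w := by
    have h0 := hkill _ hclaim2 v
    rw [sub_smul] at h0
    have h5 : (C l S T * (a * C l S T)) • v = w := by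
      rw [mul_smul, mul_smul, ← hwdef, ha, hwdef]
    have h6 := sub_eq_zero.mp h0
    rw [h5, Algebra.smul_def, mul_smul] at h6
    exact h6
  have hφT : ∃ U₀ : M l, phi l T U₀ ≠ 0 := by
    by_contra hc; push_neg at hc
    have hr0 : r = 0 := Finset.sum_eq_zero fun S' _ => by rw [hc S', mul_zero]
    rw [hr0, map_zero, zero_smul] at hw2
    exact hv hw2
  obtain ⟨U₀, hU₀⟩ := hφT
  have hnt : Nontrivial (Sm l ⧸ rad l) :=
    nontrivial_quotient_of_phi_ne phi bS Φ hΦ rad hrad hU₀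
  have hker : LinearMap.ker θ ≤ rad l := by
    intro x hx
    rw [LinearMap.mem_ker] at hx
    rw [mem_rad_iff hb st hstC hst_mul phi hphi bS Φ hΦ rad hrad]
    intro T'
    by_contra hc
    have h6 := hθact S T' x
    rw [hx, smul_zero] at h6
    have h7 : (Φ l (bS l T') x • C l S T) • v = 0 := h6.symm
    rw [Algebra.smul_def, mul_smul, ← hwdef] at h7
    have h8 := congrArg (fun y : L => (algebraMap k A (Φ l (bS l T') x)⁻¹) • y) h7
    simp only [smul_zero] at h8
    rw [← mul_smul, ← map_mul, inv_mul_cancel₀ hc, map_one, one_smul] at h8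
    exact hv h8
  have hsurj : Function.Surjective θ := by
    rw [← LinearMap.range_eq_top]
    rcases eq_bot_or_eq_top (LinearMap.range θ) with hbot | htop
    · exfalso
      have hmem : θ (bS l S) ∈ LinearMap.range θ := LinearMap.mem_range_self _ _
      rw [hbot, Submodule.mem_bot] at hmem
      rw [hθb] at hmem
      exact hv hmem
    · exact htop
  have hkereq : LinearMap.ker θ = rad l := by
    rcases eq_bot_or_eq_top (Submodule.map θ (rad l)) with hbot | htop
    · refine le_antisymm hker fun x hx => ?_
      rw [LinearMap.mem_ker]
      have hmem : θ x ∈ Submodule.map θ (rad l) := ⟨x, hx, rfl⟩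
      rw [hbot, Submodule.mem_bot] at hmem
      exact hmem
    · exfalso
      have h8 : Submodule.comap θ (Submodule.map θ (rad l)) = rad l ⊔ LinearMap.ker θ :=
        Submodule.comap_map_eq θ (rad l)
      rw [htop, Submodule.comap_top, sup_eq_left.mpr hker] at h8
      exact (not_subsingleton_iff_nontrivial.mpr hnt)
        (Submodule.Quotient.subsingleton_iff.mpr h8.symm)
  exact ⟨l, hnt,
    ⟨(LinearMap.quotKerEquivOfSurjective θ hsurj).symm.trans
      (Submodule.quotEquivOfEq _ _ hkereq)⟩⟩

end Helpers

/-- Let `A` be a cellular algebra over a field `k` with cell datum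
`(Λ, M, C, *)` (with `Λ` finite), cell modules `S_λ` with bilinear forms `φ_λ`.  Then
`{D_λ = S_λ / rad(φ_λ) : λ ∈ Λ, D_λ ≠ 0}` is a complete set of pairwise non-isomorphic
simple `A`-modules. -/
theorem cellular_simple_modules_classification
    {k A Λ : Type*} [Field k] [Ring A] [Algebra k A] [PartialOrder Λ] [Fintype Λ]
    {M : Λ → Type*} [∀ l, Fintype (M l)]
    (C : ∀ l, M l → M l → A)
    (b : Module.Basis ((l : Λ) × (M l × M l)) k A)
    (hb : ∀ (l) (S T : M l), b ⟨l, (S, T)⟩ = C l S T)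
    (st : A →ₗ[k] A)
    (hst_mul : ∀ x y : A, st (x * y) = st y * st x)
    (hst_inv : ∀ x : A, st (st x) = x)
    (hstC : ∀ (l) (S T : M l), st (C l S T) = C l T S)
    (coeff : A → ∀ l : Λ, M l → M l → k)
    (hcoeff : ∀ (a : A) (l) (S T : M l),
      a * C l S T - ∑ S' : M l, coeff a l S' S • C l S' T ∈ lowerSpan (R := k) C l)
    (phi : ∀ l, M l → M l → k)
    (hphi : ∀ (l) (S T U V : M l),
      C l S T * C l U V - algebraMap k A (phi l T U) * C l S V ∈ lowerSpan (R := k) C l)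
    (Sm : Λ → Type*) [∀ l, AddCommGroup (Sm l)] [∀ l, Module k (Sm l)]
    [∀ l, Module A (Sm l)] [∀ l, IsScalarTower k A (Sm l)]
    (bS : ∀ l, Module.Basis (M l) k (Sm l))
    (haction : ∀ (a : A) (l) (T : M l),
      a • bS l T = ∑ S' : M l, coeff a l S' T • bS l S')
    (Φ : ∀ l, Sm l → Sm l → k)
    (hΦ : ∀ (l) (x y : Sm l), Φ l x y = ∑ T : M l, ∑ U : M l,
      (bS l).repr x T * phi l T U * (bS l).repr y U)
    (rad : ∀ l, Submodule A (Sm l))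
    (hrad : ∀ (l) (x : Sm l), x ∈ rad l ↔ ∀ y : Sm l, Φ l x y = 0) :
    -- each nonzero `D_λ` is simple
    (∀ l : Λ, Nontrivial (Sm l ⧸ rad l) → IsSimpleModule A (Sm l ⧸ rad l)) ∧
    -- they are pairwise non-isomorphic
    (∀ l m : Λ, Nontrivial (Sm l ⧸ rad l) → Nontrivial (Sm m ⧸ rad m) →
      Nonempty ((Sm l ⧸ rad l) ≃ₗ[A] (Sm m ⧸ rad m)) → l = m) ∧
    -- every simple `A`-module is isomorphic to some nonzero `D_λ`
    (∀ (L : Type*) [AddCommGroup L] [Module A L], IsSimpleModule A L →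
      ∃ l : Λ, Nontrivial (Sm l ⧸ rad l) ∧ Nonempty (L ≃ₗ[A] (Sm l ⧸ rad l))) := by
  refine ⟨?_, ?_, ?_⟩
  · intro l hnt
    exact part1 hb coeff hcoeff st hstC hst_mul phi hphi bS haction Φ hΦ rad hrad l hnt
  · intro l m h1 h2 he
    exact part2 hb coeff hcoeff st hstC hst_mul hst_inv phi hphi bS haction Φ hΦ rad hrad
      l m h1 h2 he
  · intro L _ _ hL
    exact part3 hb coeff hcoeff st hstC hst_mul hst_inv phi hphi bS haction Φ hΦ rad hrad
      L hL
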